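/- Let O be a finite order ideal in the terms of n variables, K a field, A a commutative Noetherian K-algebra, and B a ∂O-marked set in R_A = A[x_1,…,x_n]. Then the one-step border reduction relation →_B associated with the degree-ordered border reduction structure is Noetherian: there is no infinite sequence g_1 →_B g_2 →_B g_3 →_B … of polynomials of R_A. -/

import Mathlib

open MvPolynomial

/-- A term in `n` variables, viewed as its exponent vector in `ℕ^n`. -/
abbrev Term (n : ℕ) := Fin n →₀ ℕ

/-- The total degree of a term. -/
def termDeg {n : ℕ} (τ : Term n) : ℕ := τ.sum fun _ e => e

/-- `O` is an order ideal: every divisor (componentwise `≤`) of a term of `O` lies in `O`. -/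
def IsOrderIdeal {n : ℕ} (O : Set (Term n)) : Prop :=
  ∀ σ τ : Term n, τ ∈ O → σ ≤ τ → σ ∈ O

/-- The border `∂O` of an order ideal `O`. -/
def border {n : ℕ} (O : Set (Term n)) : Set (Term n) :=
  {μ | μ ∉ O ∧ ∃ τ ∈ O, ∃ i : Fin n, μ = τ + Finsupp.single i 1}

/-- The Pommaret basis `P_O = {σ ∉ O : σ / min σ ∈ O}` of the monomial ideal generated by the
terms outside `O`; here `i` is the minimal variable of `σ`. -/
def pommaret {n : ℕ} (O : Set (Term n)) : Set (Term n) :=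
  {σ | σ ∉ O ∧ ∃ i : Fin n, σ i ≠ 0 ∧ (∀ j : Fin n, j < i → σ j = 0) ∧
    σ - Finsupp.single i 1 ∈ O}

/-- `F` is an `H`-marked set (with tails in `O`): for every `α ∈ H`,
`F α = α - Σ_{σ ∈ O} c_σ σ`, i.e. the coefficient of `α` is `1` and all other
terms in the support of `F α` lie in `O`. -/
def IsMarkedSet {n : ℕ} (A : Type*) [CommRing A] (O H : Set (Term n))
    (F : Term n → MvPolynomial (Fin n) A) : Prop :=
  ∀ α ∈ H, (F α).coeff α = 1 ∧ ∀ γ ∈ (F α).support, γ ≠ α → γ ∈ O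

/-- The `A`-submodule `⟨O⟩_A` of `R_A` spanned by the monomials with exponent in `O`. -/
noncomputable def OSpan {n : ℕ} (A : Type*) [CommRing A] (O : Set (Term n)) :
    Submodule A (MvPolynomial (Fin n) A) :=
  Submodule.span A ((fun σ : Term n => (monomial σ (1 : A) : MvPolynomial (Fin n) A)) '' O)

/-- `R_A = (S) ⊕ ⟨O⟩_A` as an internal direct sum of `A`-modules. -/
def IsBasisDecomp {n : ℕ} (A : Type*) [CommRing A] (O : Set (Term n))
    (S : Set (MvPolynomial (Fin n) A)) : Prop :=
  (Submodule.restrictScalars A (Ideal.span S) ⊓ OSpan A O = ⊥) ∧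
  (Submodule.restrictScalars A (Ideal.span S) ⊔ OSpan A O = ⊤)

/-- `F` is an `H`-marked basis. -/
def IsMarkedBasis {n : ℕ} (A : Type*) [CommRing A] (O H : Set (Term n))
    (F : Term n → MvPolynomial (Fin n) A) : Prop :=
  IsMarkedSet A O H F ∧ IsBasisDecomp A O (F '' H)

/-- The iterated borders: `∂^0 O = O` and `∂^{k+1} O = ∂(∂^0 O ∪ ⋯ ∪ ∂^k O)`. -/
def borderIter {n : ℕ} (O : Set (Term n)) : ℕ → Set (Term n)
  | 0 => O
  | k + 1 => border (⋃ j : Fin (k + 1), borderIter O j.1)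
decreasing_by exact j.2

/-- The index `ind_O(μ)`: the least `k` with `μ ∈ ∂^k O`. -/
noncomputable def indO {n : ℕ} (O : Set (Term n)) (μ : Term n) : ℕ :=
  sInf {k | μ ∈ borderIter O k}

/-- The multiplicative set of `β i` for the degree-ordered border reduction structure:
`M_{β_i} = {η : β_j ∤ η β_i for every j > i}`. -/
def multSet {n m : ℕ} (β : Fin m → Term n) (i : Fin m) : Set (Term n) :=
  {η | ∀ j : Fin m, i < j → ¬ β j ≤ η + β i}

/-- The cone of `β i` by its multiplicative set. -/
def cone {n m : ℕ} (β : Fin m → Term n) (i : Fin m) : Set (Term n) :=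
  {γ | ∃ η ∈ multSet β i, γ = η + β i}

/-- One step of border reduction: some `γ = η β_i ∈ supp g` with `η ∈ M_{β_i}` is replaced
using the marked polynomial `B i`. -/
def BStep {n m : ℕ} {A : Type*} [CommRing A] (β : Fin m → Term n)
    (B : Fin m → MvPolynomial (Fin n) A) (g h : MvPolynomial (Fin n) A) : Prop :=
  ∃ (i : Fin m) (η : Term n), η ∈ multSet β i ∧ η + β i ∈ g.support ∧
    h = g - monomial η (g.coeff (η + β i)) * B i

/-- The S-polynomial of two marked polynomials with head terms `α`, `α'`. -/
noncomputable def Spoly {n : ℕ} {A : Type*} [CommRing A] (α α' : Term n)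
    (f f' : MvPolynomial (Fin n) A) : MvPolynomial (Fin n) A :=
  monomial (α ⊔ α' - α) 1 * f - monomial (α ⊔ α' - α') 1 * f'

/-- `(α, α')` is a neighbour couple of distinct terms. -/
def Neighbour {n : ℕ} (α α' : Term n) : Prop :=
  α ≠ α' ∧ ((∃ j : Fin n, α = α' + Finsupp.single j 1) ∨
    (∃ i j : Fin n, α + Finsupp.single i 1 = α' + Finsupp.single j 1))

/-- `(β i, β j)` is a non-multiplicative couple for the border reduction structure. -/
def NonMultB {n m : ℕ} (β : Fin m → Term n) (i j : Fin m) : Prop :=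
  ∃ (ℓ : Fin n) (δ : Term n), Finsupp.single ℓ 1 ∉ multSet β i ∧ δ ∈ multSet β j ∧
    Finsupp.single ℓ 1 + β i = δ + β j

/-- The Pommaret multiplicative set of a term `α`: terms in the variables `x_1, …, min α`. -/
def pommMult {n : ℕ} (α : Term n) : Set (Term n) :=
  {η | ∀ j : Fin n, η j ≠ 0 → ∀ k : Fin n, k < j → α k = 0}

/-- One step of Pommaret reduction. -/
def PStep {n : ℕ} {A : Type*} [CommRing A] (O : Set (Term n))
    (P : Term n → MvPolynomial (Fin n) A) (g h : MvPolynomial (Fin n) A) : Prop :=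
  ∃ α ∈ pommaret O, ∃ η ∈ pommMult α, η + α ∈ g.support ∧
    h = g - monomial η (g.coeff (η + α)) * P α

/-- `(α, α')` is a non-multiplicative couple for the Pommaret reduction structure. -/
def NonMultP {n : ℕ} (α α' : Term n) : Prop :=
  ∃ ℓ : Fin n, Finsupp.single ℓ 1 ∉ pommMult α ∧
    ∃ δ ∈ pommMult α', Finsupp.single ℓ 1 + α = δ + α'


section Aux

open scoped Classical

variable {n : ℕ}

lemma termDeg_add (a b : Term n) : termDeg (a + b) = termDeg a + termDeg b := by
  unfold termDeg
  exact Finsupp.sum_add_index' (fun _ => rfl) (fun _ _ _ => rfl)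

lemma termDeg_zero : termDeg (0 : Term n) = 0 := by
  simp [termDeg]

lemma termDeg_single (i : Fin n) : termDeg (Finsupp.single i 1) = 1 := by
  unfold termDeg
  rw [Finsupp.sum_single_index] <;> rfl

lemma termDeg_eq_zero {η : Term n} (h : termDeg η = 0) : η = 0 := by
  unfold termDeg at h
  rw [Finsupp.sum] at h
  ext i
  by_contra hi
  have hmem : i ∈ η.support := Finsupp.mem_support_iff.2 (by simpa using hi)
  have := (Finset.sum_eq_zero_iff.1 h) i hmem
  simp only [Finsupp.coe_zero, Pi.zero_apply] at hi
  exact hi this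

lemma exists_decomp {η : Term n} (h : η ≠ 0) :
    ∃ (i : Fin n) (η' : Term n), η = η' + Finsupp.single i 1 ∧
      termDeg η = termDeg η' + 1 := by
  obtain ⟨i, hi⟩ : ∃ i, η i ≠ 0 := by
    by_contra h'
    push_neg at h'
    exact h (Finsupp.ext fun i => h' i)
  refine ⟨i, η - Finsupp.single i 1, ?_, ?_⟩
  · ext j
    simp only [Finsupp.coe_add, Pi.add_apply, Finsupp.coe_tsub, Pi.sub_apply,
      Finsupp.single_apply]
    by_cases hj : i = j
    · subst hj; rw [if_pos rfl]; omega
    · simp [hj]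
  · have hsum : η = (η - Finsupp.single i 1) + Finsupp.single i 1 := by
      ext j
      simp only [Finsupp.coe_add, Pi.add_apply, Finsupp.coe_tsub, Pi.sub_apply,
        Finsupp.single_apply]
      by_cases hj : i = j
      · subst hj; rw [if_pos rfl]; omega
      · simp [hj]
    conv_lhs => rw [hsum]
    rw [termDeg_add, termDeg_single]

/-- `U O k = O ∪ ∂¹O ∪ ⋯ ∪ ∂ᵏO`. -/
def Uset (O : Set (Term n)) (k : ℕ) : Set (Term n) :=
  ⋃ j : Fin (k + 1), borderIter O j.1

lemma mem_Uset {O : Set (Term n)} {μ : Term n} {k : ℕ} :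
    μ ∈ Uset O k ↔ ∃ j ≤ k, μ ∈ borderIter O j := by
  simp only [Uset, Set.mem_iUnion]
  constructor
  · rintro ⟨j, h⟩
    exact ⟨j.1, Nat.lt_succ_iff.1 j.2, h⟩
  · rintro ⟨j, hj, h⟩
    exact ⟨⟨j, Nat.lt_succ_iff.2 hj⟩, h⟩

lemma Uset_zero (O : Set (Term n)) : Uset O 0 = O := by
  ext μ
  rw [mem_Uset]
  constructor
  · rintro ⟨j, hj, h⟩
    interval_cases j
    rwa [borderIter] at h
  · intro h
    exact ⟨0, le_refl _, by rwa [borderIter]⟩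

lemma Uset_mono {O : Set (Term n)} {j k : ℕ} (h : j ≤ k) : Uset O j ⊆ Uset O k := by
  intro μ hμ
  rw [mem_Uset] at hμ ⊢
  obtain ⟨l, hl, hm⟩ := hμ
  exact ⟨l, hl.trans h, hm⟩

lemma borderIter_succ (O : Set (Term n)) (k : ℕ) :
    borderIter O (k + 1) = border (Uset O k) := by
  rw [borderIter]; rfl

lemma Uset_succ (O : Set (Term n)) (k : ℕ) :
    Uset O (k + 1) = Uset O k ∪ border (Uset O k) := by
  ext μ
  rw [Set.mem_union, mem_Uset, mem_Uset, ← borderIter_succ]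
  constructor
  · rintro ⟨j, hj, h⟩
    rcases Nat.lt_succ_iff_lt_or_eq.1 (Nat.lt_succ_of_le hj) with hj' | rfl
    · exact Or.inl ⟨j, Nat.lt_succ_iff.1 hj', h⟩
    · exact Or.inr h
  · rintro (⟨j, hj, h⟩ | h)
    · exact ⟨j, hj.trans (Nat.le_succ _), h⟩
    · exact ⟨k + 1, le_refl _, h⟩

lemma add_mem_Uset {O : Set (Term n)} :
    ∀ (t : ℕ) (η : Term n), termDeg η = t → ∀ (k : ℕ) (τ : Term n), τ ∈ Uset O k →
      η + τ ∈ Uset O (k + t) := by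
  intro t
  induction t with
  | zero =>
    intro η hη k τ hτ
    have : η = 0 := termDeg_eq_zero hη
    subst this
    simpa using hτ
  | succ t ih =>
    intro η hη k τ hτ
    have hne : η ≠ 0 := by
      intro h; subst h; rw [termDeg_zero] at hη; omega
    obtain ⟨i, η', rfl, hdeg⟩ := exists_decomp hne
    have hdeg' : termDeg η' = t := by omega
    have hmem : η' + τ ∈ Uset O (k + t) := ih η' hdeg' k τ hτ
    by_cases hcase : (η' + Finsupp.single i 1) + τ ∈ Uset O (k + t)
    · exact Uset_mono (by omega) hcase
    · have : (η' + Finsupp.single i 1) + τ ∈ border (Uset O (k + t)) := by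
        refine ⟨hcase, η' + τ, hmem, i, ?_⟩
        rw [add_right_comm]
      have h2 : (η' + Finsupp.single i 1) + τ ∈ Uset O (k + t + 1) := by
        rw [Uset_succ]
        exact Or.inr this
      have : k + (t + 1) = k + t + 1 := by omega
      rwa [this]

lemma Uset_char {O : Set (Term n)} :
    ∀ (k : ℕ) (μ : Term n), μ ∈ Uset O k →
      μ ∈ O ∨ ∃ b ∈ border O, ∃ η : Term n, termDeg η < k ∧ μ = η + b := by
  intro k
  induction k with
  | zero =>
    intro μ hμ
    rw [Uset_zero] at hμ
    exact Or.inl hμ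
  | succ k ih =>
    intro μ hμ
    rw [Uset_succ, Set.mem_union] at hμ
    rcases hμ with hμ | hμ
    · rcases ih μ hμ with h | ⟨b, hb, η, hη, heq⟩
      · exact Or.inl h
      · exact Or.inr ⟨b, hb, η, by omega, heq⟩
    · obtain ⟨hnot, τ, hτ, i, heq⟩ := hμ
      have hO_sub : O ⊆ Uset O k := by
        intro x hx
        exact Uset_mono (Nat.zero_le k) (by rw [Uset_zero]; exact hx)
      rcases ih τ hτ with h | ⟨b, hb, η, hη, heqτ⟩
      · have hμO : μ ∉ O := fun hc => hnot (hO_sub hc)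
        refine Or.inr ⟨μ, ⟨hμO, τ, h, i, heq⟩, 0, ?_, (zero_add μ).symm⟩
        rw [termDeg_zero]; omega
      · refine Or.inr ⟨b, hb, η + Finsupp.single i 1, ?_, ?_⟩
        · rw [termDeg_add, termDeg_single]; omega
        · rw [heq, heqτ, add_right_comm]

lemma border_subset_Uset_one {O : Set (Term n)} {b : Term n} (hb : b ∈ border O) :
    b ∈ Uset O 1 := by
  rw [mem_Uset]
  refine ⟨1, le_refl _, ?_⟩
  rw [borderIter_succ, Uset_zero]
  exact hb

lemma indO_le_of_mem_Uset {O : Set (Term n)} {μ : Term n} {k : ℕ} (h : μ ∈ Uset O k) :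
    indO O μ ≤ k := by
  obtain ⟨j, hj, hm⟩ := mem_Uset.1 h
  exact le_trans (Nat.sInf_le hm) hj

lemma indO_tail_le {O : Set (Term n)} {η σ : Term n} (hσ : σ ∈ O) :
    indO O (η + σ) ≤ termDeg η := by
  have : η + σ ∈ Uset O (0 + termDeg η) :=
    add_mem_Uset (termDeg η) η rfl 0 σ (by rwa [Uset_zero])
  exact indO_le_of_mem_Uset (by simpa using this)

lemma cone_not_mem_Uset {O : Set (Term n)} (hO : IsOrderIdeal O)
    {m : ℕ} {β : Fin m → Term n} (hβrange : Set.range β = border O)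
    (hβdeg : Monotone fun i => termDeg (β i))
    {i : Fin m} {η : Term n} (hη : η ∈ multSet β i) :
    η + β i ∉ Uset O (termDeg η) := by
  intro hmem
  have hβiB : β i ∈ border O := hβrange ▸ Set.mem_range_self i
  have hle : β i ≤ η + β i := by
    rw [Finsupp.le_iff]
    intro a _
    simp only [Finsupp.coe_add, Pi.add_apply]
    omega
  rcases Uset_char _ _ hmem with hμO | ⟨b, hb, η', hdeg, heq⟩
  · exact hβiB.1 (hO _ _ hμO hle)
  · obtain ⟨j, rfl⟩ : ∃ j, β j = b := by rw [← hβrange] at hb; exact hb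
    have hdegeq : termDeg η' + termDeg (β j) = termDeg η + termDeg (β i) := by
      rw [← termDeg_add, ← termDeg_add, ← heq]
    have hij : i < j := by
      by_contra hle'
      push_neg at hle'
      have := hβdeg hle'
      simp only at this
      omega
    refine hη j hij ?_
    rw [heq]
    rw [Finsupp.le_iff]
    intro a _
    simp only [Finsupp.coe_add, Pi.add_apply]
    omega

lemma indO_cone {O : Set (Term n)} (hO : IsOrderIdeal O)
    {m : ℕ} {β : Fin m → Term n} (hβrange : Set.range β = border O)
    (hβdeg : Monotone fun i => termDeg (β i))
    {i : Fin m} {η : Term n} (hη : η ∈ multSet β i) :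
    indO O (η + β i) = termDeg η + 1 := by
  have hβiB : β i ∈ border O := hβrange ▸ Set.mem_range_self i
  have hup : η + β i ∈ Uset O (1 + termDeg η) :=
    add_mem_Uset (termDeg η) η rfl 1 (β i) (border_subset_Uset_one hβiB)
  have hle : indO O (η + β i) ≤ termDeg η + 1 :=
    indO_le_of_mem_Uset (by rwa [Nat.add_comm] at hup)
  have hne : {k | η + β i ∈ borderIter O k}.Nonempty := by
    obtain ⟨j, _, hm⟩ := mem_Uset.1 hup
    exact ⟨j, hm⟩
  have hmem : η + β i ∈ borderIter O (indO O (η + β i)) := Nat.sInf_mem hne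
  have hgt : ¬ indO O (η + β i) ≤ termDeg η := by
    intro hc
    have : η + β i ∈ Uset O (termDeg η) :=
      Uset_mono hc (mem_Uset.2 ⟨indO O (η + β i), le_refl _, hmem⟩)
    exact cone_not_mem_Uset hO hβrange hβdeg hη this
  omega

/-- The measure of a polynomial: the function counting, for each `w`, the number of
terms of its support of index `w`. -/
noncomputable def measureP {A : Type*} [CommRing A] (O : Set (Term n))
    (p : MvPolynomial (Fin n) A) : ℕ →₀ ℕ :=
  (p.support.val.map (indO O)).toFinsupp

lemma measureP_apply {A : Type*} [CommRing A] (O : Set (Term n))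
    (p : MvPolynomial (Fin n) A) (w : ℕ) :
    measureP O p w = (p.support.filter (fun γ => indO O γ = w)).card := by
  rw [measureP, Multiset.toFinsupp_apply, Multiset.count_map]
  rw [Finset.card_def, Finset.filter_val]
  congr 1
  apply Multiset.filter_congr
  intro x _
  exact eq_comm

lemma step_decreases {A : Type*} [CommRing A] {O : Set (Term n)} (hO : IsOrderIdeal O)
    {m : ℕ} {β : Fin m → Term n} (hβrange : Set.range β = border O)
    (hβdeg : Monotone fun i => termDeg (β i))
    {B : Fin m → MvPolynomial (Fin n) A}
    (hB : ∀ i, (B i).coeff (β i) = 1 ∧ ∀ γ ∈ (B i).support, γ ≠ β i → γ ∈ O)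
    {g h : MvPolynomial (Fin n) A} (hstep : BStep β B g h) :
    Finsupp.Lex (· > ·) (· < ·) (measureP O h) (measureP O g) := by
  classical
  obtain ⟨i, η, hη, hsup, heq⟩ := hstep
  set c := g.coeff (η + β i) with hc
  set t := termDeg η with ht
  -- the coefficient of the reduced term vanishes
  have hcoeff0 : h.coeff (η + β i) = 0 := by
    rw [heq, coeff_sub, coeff_monomial_mul, (hB i).1, mul_one, sub_self]
  -- description of the support of `h`
  have hsupp : ∀ γ ∈ h.support, γ ≠ η + β i ∧ (γ ∈ g.support ∨ indO O γ ≤ t) := by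
    intro γ hγ
    have hγne : γ ≠ η + β i := by
      intro hγeq
      rw [MvPolynomial.mem_support_iff, hγeq, hcoeff0] at hγ
      exact hγ rfl
    refine ⟨hγne, ?_⟩
    by_cases hγg : γ ∈ g.support
    · exact Or.inl hγg
    · right
      have hγm : γ ∈ (monomial η c * B i).support := by
        rw [MvPolynomial.mem_support_iff] at hγ ⊢
        rw [MvPolynomial.notMem_support_iff] at hγg
        rw [heq, coeff_sub, hγg, zero_sub, neg_ne_zero] at hγ
        exact hγ
      have hmem := MvPolynomial.support_mul _ _ hγm
      rw [Finset.mem_add] at hmem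
      obtain ⟨a, ha, b, hb, hab⟩ := hmem
      have haη : a = η := by
        have := MvPolynomial.support_monomial_subset ha
        simpa using this
      subst haη
      subst hab
      have hbβ : b ≠ β i := by
        intro hbeq
        subst hbeq
        exact hγne rfl
      exact indO_tail_le ((hB i).2 b hb hbβ)
  have hind : indO O (η + β i) = t + 1 := indO_cone hO hβrange hβdeg hη
  -- counting lemmas
  have hcount_le : ∀ w, t < w → measureP O h w ≤ measureP O g w := by
    intro w hw
    rw [measureP_apply, measureP_apply]
    apply Finset.card_le_card
    intro γ hγ
    rw [Finset.mem_filter] at hγ ⊢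
    obtain ⟨hγh, hγw⟩ := hγ
    obtain ⟨hne, hcase⟩ := hsupp γ hγh
    rcases hcase with hg' | hbound
    · exact ⟨hg', hγw⟩
    · exact absurd hγw (by omega)
  have hcount_lt : measureP O h (t + 1) < measureP O g (t + 1) := by
    rw [measureP_apply, measureP_apply]
    have hsub : (h.support.filter fun γ => indO O γ = t + 1) ⊆
        (g.support.filter fun γ => indO O γ = t + 1) := by
      intro γ hγ
      rw [Finset.mem_filter] at hγ ⊢
      obtain ⟨hγh, hγw⟩ := hγ
      obtain ⟨hne, hcase⟩ := hsupp γ hγh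
      rcases hcase with hg' | hbound
      · exact ⟨hg', hγw⟩
      · exact absurd hγw (by omega)
    refine Finset.card_lt_card ((Finset.ssubset_iff_of_subset hsub).2
      ⟨η + β i, Finset.mem_filter.2 ⟨hsup, hind⟩, fun hmem => ?_⟩)
    exact (hsupp _ (Finset.mem_filter.1 hmem).1).1 rfl
  -- conclude in the lexicographic order
  rw [Finsupp.lex_def]
  set S := ((measureP O h).support ∪ (measureP O g).support).filter
      (fun w => t < w ∧ measureP O h w ≠ measureP O g w) with hS
  have hSne : S.Nonempty := by
    refine ⟨t + 1, Finset.mem_filter.2 ⟨?_, Nat.lt_succ_self t, Nat.ne_of_lt hcount_lt⟩⟩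
    apply Finset.mem_union_right
    rw [Finsupp.mem_support_iff]
    omega
  set j := S.max' hSne with hj
  have hjS : j ∈ S := S.max'_mem hSne
  rw [Finset.mem_filter] at hjS
  obtain ⟨hjsup, hjt, hjne⟩ := hjS
  refine ⟨j, ?_, lt_of_le_of_ne (hcount_le j hjt) hjne⟩
  intro d hd
  by_contra hne'
  have hdt : t < d := lt_trans hjt hd
  have hdS : d ∈ S := by
    refine Finset.mem_filter.2 ⟨?_, hdt, hne'⟩
    rw [Finset.mem_union, Finsupp.mem_support_iff, Finsupp.mem_support_iff]
    by_contra hboth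
    push_neg at hboth
    obtain ⟨h1, h2⟩ := hboth
    exact hne' (h1.trans h2.symm)
  exact absurd (Finset.le_max' S d hdS) (not_le.2 hd)

end Aux

/-- the one-step border reduction relation associated with the
degree-ordered border reduction structure is Noetherian: there is no infinite reduction
chain. -/
theorem border_reduction_noetherian {n : ℕ} (K : Type*) [Field K] (A : Type*) [CommRing A] [Algebra K A]
    [IsNoetherianRing A]
    (O : Set (Term n)) (hO : IsOrderIdeal O) (hOfin : O.Finite)
    {m : ℕ} (β : Fin m → Term n) (hβinj : Function.Injective β)
    (hβrange : Set.range β = border O)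
    (hβdeg : Monotone fun i => termDeg (β i))
    (B : Fin m → MvPolynomial (Fin n) A)
    (hB : ∀ i, (B i).coeff (β i) = 1 ∧ ∀ γ ∈ (B i).support, γ ≠ β i → γ ∈ O) :
    ¬ ∃ g : ℕ → MvPolynomial (Fin n) A, ∀ k : ℕ, BStep β B (g k) (g (k + 1)) := by
  rintro ⟨g, hg⟩
  have hwf : WellFounded (Finsupp.Lex ((· > ·) : ℕ → ℕ → Prop) ((· < ·) : ℕ → ℕ → Prop)) :=
    Finsupp.Lex.wellFounded' (fun k (h : k < 0) => Nat.not_lt_zero k h)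
      (wellFounded_lt) (wellFounded_lt)
  obtain ⟨a, ⟨k, rfl⟩, hmin⟩ := hwf.has_min (Set.range fun k => measureP O (g k))
    ⟨_, ⟨0, rfl⟩⟩
  exact hmin _ ⟨k + 1, rfl⟩ (step_decreases hO hβrange hβdeg hB (hg k))
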